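/- For every integer k ≥ 1, ∑_{n=1}^{F_k − 1} ⌊φ n⌋ = (1/2)(F_{k+1} − 1)(F_k − 1). -/

import Mathlib

open Real goldenRatio Finset

lemma abs_goldenConj_lt_one : |goldenConj| < 1 := by
  rw [abs_lt]
  exact ⟨neg_one_lt_goldenConj, by linarith [goldenConj_neg]⟩

lemma abs_goldenConj_pos : 0 < |goldenConj| := abs_pos.mpr goldenConj_ne_zero

lemma cassini (n : ℕ) :
    (Nat.fib (n + 1) : ℤ) ^ 2 - Nat.fib (n + 2) * Nat.fib n = (-1) ^ n := by
  induction n with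
  | zero => simp
  | succ n ih =>
    have h1 : (Nat.fib (n + 3) : ℤ) = Nat.fib (n + 1) + Nat.fib (n + 2) := by
      exact_mod_cast congrArg (Nat.cast (R := ℤ)) (Nat.fib_add_two (n := n + 1))
    have h2 : (Nat.fib (n + 2) : ℤ) = Nat.fib n + Nat.fib (n + 1) := by
      exact_mod_cast congrArg (Nat.cast (R := ℤ)) (Nat.fib_add_two (n := n))
    have h3 : (-1 : ℤ) ^ (n + 1) = -(-1) ^ n := by ring
    rw [show n + 1 + 1 = n + 2 by omega, show n + 1 + 2 = n + 3 by omega, h3, h1]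
    nlinarith [ih]

lemma gold_mul_fib (n : ℕ) :
    goldenRatio * (Nat.fib n : ℝ) = (Nat.fib (n + 1) : ℝ) - goldenConj ^ n := by
  have := fib_succ_sub_goldenRatio_mul_fib n
  linarith

/-- Best approximation property: for `1 ≤ n < fib (m+3)`, `n * φ` is at distance
more than `|ψ|^(m+3)` from every integer. -/
lemma best_approx (m : ℕ) (n : ℕ) (hn1 : 1 ≤ n) (hnk : n < Nat.fib (m + 3)) (p : ℤ) :
    |goldenConj| ^ (m + 3) < |goldenRatio * n - p| := by
  have hF1pos : (0 : ℤ) < Nat.fib (m + 1) := by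
    exact_mod_cast Nat.fib_pos.mpr (by omega)
  have hF2pos : (0 : ℤ) < Nat.fib (m + 2) := by
    exact_mod_cast Nat.fib_pos.mpr (by omega)
  have hsumF : (Nat.fib (m + 1) : ℤ) + Nat.fib (m + 2) = Nat.fib (m + 3) := by
    exact_mod_cast congrArg (Nat.cast (R := ℤ)) (Nat.fib_add_two (n := m + 1)).symm
  set e : ℤ := (-1) ^ m with he_def
  have he : e * e = 1 := by rw [he_def, ← mul_pow]; norm_num
  have hcas : (Nat.fib (m + 2) : ℤ) ^ 2 - Nat.fib (m + 3) * Nat.fib (m + 1) = -e := by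
    rw [show (-e : ℤ) = (-1) ^ (m + 1) by rw [he_def]; ring]
    exact cassini (m + 1)
  have hnZ : (1 : ℤ) ≤ n := by exact_mod_cast hn1
  have hnltZ : (n : ℤ) < Nat.fib (m + 3) := by exact_mod_cast hnk
  obtain ⟨a, b, han, hap⟩ :
      ∃ a b : ℤ, a * Nat.fib (m + 2) + b * Nat.fib (m + 1) = n ∧
        a * Nat.fib (m + 3) + b * Nat.fib (m + 2) = p := by
    refine ⟨e * (p * Nat.fib (m + 1) - n * Nat.fib (m + 2)),
      e * (n * Nat.fib (m + 3) - p * Nat.fib (m + 2)), ?_, ?_⟩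
    · linear_combination (-e * (n : ℤ)) * hcas + (n : ℤ) * he
    · linear_combination (-e * p) * hcas + p * he
  have hab : a * b ≤ 0 := by
    by_contra h
    push_neg at h
    rcases mul_pos_iff.mp h with ⟨ha, hb⟩ | ⟨ha, hb⟩
    · nlinarith [mul_le_mul_of_nonneg_right (by omega : (1:ℤ) ≤ a) hF2pos.le,
        mul_le_mul_of_nonneg_right (by omega : (1:ℤ) ≤ b) hF1pos.le]
    · nlinarith [mul_le_mul_of_nonneg_right (by omega : a ≤ -1) hF2pos.le,
        mul_le_mul_of_nonneg_right (by omega : b ≤ -1) hF1pos.le]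
  have hne : a ≠ 0 ∨ b ≠ 0 := by
    by_contra h
    push_neg at h
    rw [h.1, h.2] at han
    simp at han
    omega
  -- real identity
  have e2 : goldenRatio * (Nat.fib (m + 2) : ℝ) = (Nat.fib (m + 3) : ℝ) - goldenConj ^ (m + 2) := by
    have := gold_mul_fib (m + 2); rwa [show m + 2 + 1 = m + 3 by omega] at this
  have e1 : goldenRatio * (Nat.fib (m + 1) : ℝ) = (Nat.fib (m + 2) : ℝ) - goldenConj ^ (m + 1) := by
    have := gold_mul_fib (m + 1); rwa [show m + 1 + 1 = m + 2 by omega] at this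
  have hnR : (n : ℝ) = a * Nat.fib (m + 2) + b * Nat.fib (m + 1) := by exact_mod_cast han.symm
  have hpR : (p : ℝ) = a * Nat.fib (m + 3) + b * Nat.fib (m + 2) := by exact_mod_cast hap.symm
  have hval : goldenRatio * n - p =
      -((a : ℝ) * goldenConj ^ (m + 2) + (b : ℝ) * goldenConj ^ (m + 1)) := by
    linear_combination goldenRatio * hnR - hpR + (a : ℝ) * e2 + (b : ℝ) * e1
  set x : ℝ := (a : ℝ) * goldenConj ^ (m + 2) with hx_def
  set y : ℝ := (b : ℝ) * goldenConj ^ (m + 1) with hy_def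
  have hpowneg : goldenConj ^ (m + 2) * goldenConj ^ (m + 1) < 0 := by
    rw [← pow_add, show m + 2 + (m + 1) = 2 * m + 3 by omega]
    exact Odd.pow_neg ⟨m + 1, by ring⟩ goldenConj_neg
  have habR : (a : ℝ) * (b : ℝ) ≤ 0 := by exact_mod_cast hab
  have hxy : 0 ≤ x * y := by
    have : x * y = ((a : ℝ) * b) * (goldenConj ^ (m + 2) * goldenConj ^ (m + 1)) := by
      rw [hx_def, hy_def]; ring
    rw [this]
    exact mul_nonneg_of_nonpos_of_nonpos habR hpowneg.le
  have habs : |x + y| = |x| + |y| := by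
    rcases mul_nonneg_iff.mp hxy with ⟨hx, hy⟩ | ⟨hx, hy⟩
    · rw [abs_of_nonneg hx, abs_of_nonneg hy, abs_of_nonneg (by linarith)]
    · rw [abs_of_nonpos hx, abs_of_nonpos hy, abs_of_nonpos (by linarith)]; ring
  have hxabs : |x| = |(a : ℝ)| * |goldenConj| ^ (m + 2) := by
    rw [hx_def, abs_mul, abs_pow]
  have hyabs : |y| = |(b : ℝ)| * |goldenConj| ^ (m + 1) := by
    rw [hy_def, abs_mul, abs_pow]
  have hgoal : |goldenRatio * n - p| = |x| + |y| := by rw [hval, abs_neg, habs]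
  rw [hgoal]
  have hppos1 : (0 : ℝ) < |goldenConj| ^ (m + 1) := pow_pos abs_goldenConj_pos _
  have hppos2 : (0 : ℝ) < |goldenConj| ^ (m + 2) := pow_pos abs_goldenConj_pos _
  have hdec : ∀ i j : ℕ, i < j → |goldenConj| ^ j < |goldenConj| ^ i := fun i j hij =>
    pow_lt_pow_right_of_lt_one₀ abs_goldenConj_pos abs_goldenConj_lt_one hij
  rcases hne with ha | hb
  · have h1 : (1 : ℝ) ≤ |(a : ℝ)| := by
      rw [← Int.cast_abs]; exact_mod_cast Int.one_le_abs (by omega)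
    have : |goldenConj| ^ (m + 2) ≤ |x| := by
      rw [hxabs]; nlinarith
    have h2 : |goldenConj| ^ (m + 3) < |goldenConj| ^ (m + 2) := hdec _ _ (by omega)
    have hy0 : 0 ≤ |y| := abs_nonneg _
    linarith
  · have h1 : (1 : ℝ) ≤ |(b : ℝ)| := by
      rw [← Int.cast_abs]; exact_mod_cast Int.one_le_abs (by omega)
    have : |goldenConj| ^ (m + 1) ≤ |y| := by
      rw [hyabs]; nlinarith
    have h2 : |goldenConj| ^ (m + 3) < |goldenConj| ^ (m + 1) := hdec _ _ (by omega)
    have hx0 : 0 ≤ |x| := abs_nonneg _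
    linarith

lemma frac_bounds (m n : ℕ) (hn1 : 1 ≤ n) (hnk : n < Nat.fib (m + 3)) :
    |goldenConj| ^ (m + 3) < goldenRatio * n - ⌊goldenRatio * (n : ℝ)⌋ ∧
      goldenRatio * n - ⌊goldenRatio * (n : ℝ)⌋ < 1 - |goldenConj| ^ (m + 3) := by
  have h1 := best_approx m n hn1 hnk ⌊goldenRatio * (n : ℝ)⌋
  have h2 := best_approx m n hn1 hnk (⌊goldenRatio * (n : ℝ)⌋ + 1)
  have hf0 : (0 : ℝ) ≤ goldenRatio * n - ⌊goldenRatio * (n : ℝ)⌋ :=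
    sub_nonneg.mpr (Int.floor_le _)
  have hf1 : goldenRatio * n - ⌊goldenRatio * (n : ℝ)⌋ < 1 := by
    linarith [Int.lt_floor_add_one (goldenRatio * (n : ℝ))]
  rw [abs_of_nonneg hf0] at h1
  have hc : ((⌊goldenRatio * (n : ℝ)⌋ + 1 : ℤ) : ℝ) = (⌊goldenRatio * (n : ℝ)⌋ : ℝ) + 1 := by
    push_cast; ring
  rw [hc, abs_of_nonpos (show goldenRatio * n - ((⌊goldenRatio * (n : ℝ)⌋ : ℝ) + 1) ≤ 0 by linarith)] at h2
  exact ⟨h1, by linarith⟩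

lemma pair (m n : ℕ) (hn1 : 1 ≤ n) (hnk : n < Nat.fib (m + 3)) :
    (⌊goldenRatio * (n : ℝ)⌋ : ℝ) + (⌊goldenRatio * ((Nat.fib (m + 3) - n : ℕ) : ℝ)⌋ : ℝ)
      = (Nat.fib (m + 4) : ℝ) - 1 := by
  set j : ℕ := Nat.fib (m + 3) - n with hj_def
  have hj1 : 1 ≤ j := by omega
  have hjlt : j < Nat.fib (m + 3) := by omega
  have hcast : (j : ℝ) = (Nat.fib (m + 3) : ℝ) - n := by
    rw [hj_def]; push_cast [Nat.cast_sub hnk.le]; ring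
  obtain ⟨ha1, ha2⟩ := frac_bounds m n hn1 hnk
  obtain ⟨hb1, hb2⟩ := frac_bounds m j hj1 hjlt
  have hg : goldenRatio * (Nat.fib (m + 3) : ℝ) = (Nat.fib (m + 4) : ℝ) - goldenConj ^ (m + 3) := by
    have := gold_mul_fib (m + 3); rwa [show m + 3 + 1 = m + 4 by omega] at this
  have hsum : goldenRatio * (n : ℝ) + goldenRatio * (j : ℝ)
      = (Nat.fib (m + 4) : ℝ) - goldenConj ^ (m + 3) := by
    rw [hcast]; linear_combination hg
  set A : ℤ := ⌊goldenRatio * (n : ℝ)⌋ with hA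
  set B : ℤ := ⌊goldenRatio * (j : ℝ)⌋ with hB
  set d : ℤ := Nat.fib (m + 4) - 1 - A - B with hd_def
  have hd : (d : ℝ) = (goldenRatio * n - A) + (goldenRatio * j - B) + goldenConj ^ (m + 3) - 1 := by
    rw [hd_def]; push_cast; linarith [hsum]
  have hψ1 : goldenConj ^ (m + 3) ≤ |goldenConj| ^ (m + 3) := by
    rw [← abs_pow]; exact le_abs_self _
  have hψ2 : -(|goldenConj| ^ (m + 3)) ≤ goldenConj ^ (m + 3) := by
    rw [← abs_pow]; exact neg_abs_le _
  have hεpos : (0 : ℝ) < |goldenConj| ^ (m + 3) := pow_pos abs_goldenConj_pos _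
  have hlt : |(d : ℝ)| < 1 := by
    rw [abs_lt]; constructor <;> [linarith; linarith]
  have hd0 : d = 0 := by
    have h' : |d| < 1 := by exact_mod_cast (by rwa [← Int.cast_abs] at hlt : ((|d| : ℤ) : ℝ) < 1)
    rw [abs_lt] at h'
    omega
  have hfin : (Nat.fib (m + 4) : ℤ) - 1 - A - B = 0 := hd0
  have : ((A : ℝ)) + B = (Nat.fib (m + 4) : ℝ) - 1 := by
    have := congrArg (Int.cast (R := ℝ)) hfin
    push_cast at this
    linarith
  exact this

theorem A_k_one (k : ℕ) (hk : 1 ≤ k) :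
    (∑ n ∈ Finset.Icc 1 (Nat.fib k - 1), (⌊(1 + Real.sqrt 5) / 2 * (n : ℝ)⌋ : ℝ)) =
      (1 / 2) * ((Nat.fib (k + 1) : ℝ) - 1) * ((Nat.fib k : ℝ) - 1) := by
  show (∑ n ∈ Finset.Icc 1 (Nat.fib k - 1), (⌊goldenRatio * (n : ℝ)⌋ : ℝ)) = _
  rcases lt_or_ge k 3 with hk3 | hk3
  · interval_cases k <;> norm_num [Nat.fib]
  · obtain ⟨m, rfl⟩ : ∃ m, k = m + 3 := ⟨k - 3, by omega⟩
    set N := Nat.fib (m + 3) with hN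
    have hN2 : 2 ≤ N := by
      have h := Nat.fib_mono (show 3 ≤ m + 3 by omega)
      simpa [hN, show Nat.fib 3 = 2 by rfl] using h
    set f : ℕ → ℝ := fun n => (⌊goldenRatio * (n : ℝ)⌋ : ℝ) with hf
    have hrefl : ∑ n ∈ Icc 1 (N - 1), f n = ∑ n ∈ Icc 1 (N - 1), f (N - n) := by
      refine sum_nbij' (fun n => N - n) (fun n => N - n) ?_ ?_ ?_ ?_ ?_ <;>
        intro a ha <;> simp only [mem_Icc] at * <;>
        first
          | omega
          | rw [Nat.sub_sub_self (by omega : a ≤ N)]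
    have h2S : (∑ n ∈ Icc 1 (N - 1), f n) + (∑ n ∈ Icc 1 (N - 1), f n)
        = ∑ n ∈ Icc 1 (N - 1), ((Nat.fib (m + 4) : ℝ) - 1) := by
      nth_rewrite 2 [hrefl]
      rw [← Finset.sum_add_distrib]
      refine Finset.sum_congr rfl fun n hn => ?_
      simp only [mem_Icc] at hn
      exact pair m n hn.1 (by omega)
    rw [Finset.sum_const, Nat.card_Icc] at h2S
    have hcard : ((N - 1 + 1 - 1 : ℕ) : ℝ) = (N : ℝ) - 1 := by
      have : N - 1 + 1 - 1 = N - 1 := by omega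
      rw [this, Nat.cast_sub (by omega)]; norm_num
    rw [nsmul_eq_mul, hcard] at h2S
    rw [show m + 3 + 1 = m + 4 by omega]
    linarith
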